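/- arXiv:2512.21128 — 6 statements merged into one kernel-verified Lean document; each statement's English description precedes it below -/
import Mathlib

section
/- Let k ≥ 1 and let G be a finite connected simple graph on a vertex set V with |V| ≥ k+1. Then G is k-vertex-connected, i.e., for every X ⊆ V with |X| ≤ k−1 the induced subgraph G[V∖X] is connected, if and only if for every connected cut S of G one has |Γ(S)| ≥ min{k, |V∖S|}, where Γ(S) is the set of vertices in V∖S that are adjacent in G to some vertex of S. -/
open Finset

variable {V : Type*} [Fintype V] [DecidableEq V]

/-- `Crosses S e`: exactly one endpoint of the edge/link `e` lies in `S`. -/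
def Crosses (S : Finset V) (e : Sym2 V) : Prop :=
  ∃ x y : V, e = s(x, y) ∧ x ∈ S ∧ y ∉ S

instance (S : Finset V) : DecidablePred (Crosses S) := fun e =>
  decidable_of_iff (∃ x y : V, e = s(x, y) ∧ x ∈ S ∧ y ∉ S) Iff.rfl

/-- The cut `δ(S)`: edges of `G` with exactly one endpoint in `S`. -/
def cutEdges (G : SimpleGraph V) [DecidableRel G.Adj] (S : Finset V) :
    Finset (Sym2 V) :=
  G.edgeFinset.filter fun e => Crosses S e

/-- `G` is `k`-edge-connected: every nonempty proper cut has at least `k` crossing edges. -/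
def EdgeConnected (G : SimpleGraph V) [DecidableRel G.Adj] (k : ℕ) : Prop :=
  ∀ S : Finset V, S.Nonempty → S ≠ Finset.univ → k ≤ (cutEdges G S).card

/-- `S` is a `k`-cut: a nonempty proper vertex set with exactly `k` crossing edges. -/
def IsCut (G : SimpleGraph V) [DecidableRel G.Adj] (k : ℕ) (S : Finset V) : Prop :=
  S.Nonempty ∧ S ≠ Finset.univ ∧ (cutEdges G S).card = k

/-- `(S₁, S₂)` are snug shores for `v` (with respect to the root `r`):
two `k`-cuts avoiding `r` with `v ∉ S₁` and `S₂ = S₁ ∪ {v}`. -/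
def SnugShores (G : SimpleGraph V) [DecidableRel G.Adj] (k : ℕ) (r v : V)
    (S₁ S₂ : Finset V) : Prop :=
  IsCut G k S₁ ∧ IsCut G k S₂ ∧ r ∉ S₁ ∧ r ∉ S₂ ∧ v ∉ S₁ ∧ S₂ = insert v S₁

/-- `v` is a snug vertex (with respect to the root `r`). -/
def Snug (G : SimpleGraph V) [DecidableRel G.Adj] (k : ℕ) (r v : V) : Prop :=
  v ≠ r ∧ k + 1 ≤ G.degree v ∧ ∃ S₁ S₂ : Finset V, SnugShores G k r v S₁ S₂

/-- A snug chain: snug vertices `u 0, …, u t` together with `k`-cuts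
`S 0, …, S (t+1)` such that `(S i, S (i+1))` are snug shores for `u i`. -/
def IsSnugChain (G : SimpleGraph V) [DecidableRel G.Adj] (k : ℕ) (r : V)
    (t : ℕ) (u : ℕ → V) (S : ℕ → Finset V) : Prop :=
  ∀ i ≤ t, Snug G k r (u i) ∧ SnugShores G k r (u i) (S i) (S (i + 1))

open SimpleGraph

section Helpers
variable {G : SimpleGraph V}

lemma cross_lemma {s : Set V} {a b : V} (ha : a ∈ s) (hb : b ∈ s)
    (hconn : (G.induce s).Connected) (S : Set V) (haS : a ∈ S) (hbS : b ∉ S) :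
    ∃ u w, u ∈ S ∧ w ∉ S ∧ w ∈ s ∧ G.Adj u w := by
  obtain ⟨p⟩ := hconn ⟨a, ha⟩ ⟨b, hb⟩
  let q := p.map (SimpleGraph.Hom.comap Subtype.val G)
  obtain ⟨d, hd, h1, h2⟩ := q.exists_boundary_dart S haS hbS
  refine ⟨d.fst, d.snd, h1, h2, ?_, d.adj⟩
  have hsup : d.snd ∈ q.support := q.dart_snd_mem_support_of_mem_darts hd
  rw [show q = p.map (SimpleGraph.Hom.comap Subtype.val G) from rfl] at hsup
  erw [Walk.support_map, List.mem_map] at hsup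
  obtain ⟨w, _, hww⟩ := hsup
  exact hww ▸ w.2

lemma induce_singleton_connected (v : V) : (G.induce ({v} : Set V)).Connected := by
  have hne : Nonempty ↥({v} : Set V) := ⟨⟨v, rfl⟩⟩
  refine ⟨fun x y => ?_⟩
  have : x = y := Subtype.ext (by rw [x.2, y.2])
  exact this ▸ Reachable.refl x

lemma reach_of_mem_support {s : Set V} {a : V} (ha : a ∈ s) {b : ↥s}
    (p : (G.induce s).Walk ⟨a, ha⟩ b) {w : ↥s} (hw : w ∈ p.support) :
    (G.induce s).Reachable ⟨a, ha⟩ w :=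
  ⟨p.takeUntil w hw⟩

/-- Reachability within the induced subgraph on `D`. -/
def Reach (G : SimpleGraph V) (D : Finset V) (v w : V) : Prop :=
  ∃ (hv : v ∈ D) (hw : w ∈ D), (G.induce (D : Set V)).Reachable ⟨v, hv⟩ ⟨w, hw⟩

lemma Reach.symm' {D : Finset V} {v w : V} (h : Reach G D v w) : Reach G D w v := by
  obtain ⟨hv, hw, hr⟩ := h; exact ⟨hw, hv, hr.symm⟩

lemma Reach.trans' {D : Finset V} {u v w : V} (h : Reach G D u v) (h' : Reach G D v w) :
    Reach G D u w := by
  obtain ⟨hu, hv, hr⟩ := h; obtain ⟨hv', hw, hr'⟩ := h'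
  exact ⟨hu, hw, hr.trans hr'⟩

open Classical in
/-- The connected component of `v` in the induced subgraph on `D`, as a finset. -/
noncomputable def Comp (G : SimpleGraph V) (D : Finset V) (v : V) : Finset V :=
  D.filter (Reach G D v)

lemma mem_Comp {D : Finset V} {v w : V} : w ∈ Comp G D v ↔ w ∈ D ∧ Reach G D v w := by
  classical simp [Comp]

lemma mem_Comp_self {D : Finset V} {v : V} (hv : v ∈ D) : v ∈ Comp G D v :=
  mem_Comp.2 ⟨hv, hv, hv, Reachable.refl _⟩

lemma Comp_subset {D : Finset V} {v : V} : Comp G D v ⊆ D := fun _ h => (mem_Comp.1 h).1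

lemma Comp_closure {D : Finset V} {v u w : V} (hu : u ∈ Comp G D v) (hw : w ∈ D)
    (hadj : G.Adj u w) : w ∈ Comp G D v := by
  obtain ⟨huD, hvD, huD', hr⟩ := mem_Comp.1 hu
  refine mem_Comp.2 ⟨hw, hvD, hw, hr.trans ⟨Walk.cons ?_ Walk.nil⟩⟩
  exact hadj

lemma Comp_connected {D : Finset V} {v : V} (hv : v ∈ D) :
    (G.induce ((Comp G D v : Finset V) : Set V)).Connected := by
  apply G.induce_connected_of_patches v (mem_Comp_self hv)
  intro w hw
  obtain ⟨hwD, hvD, hwD', hr⟩ := mem_Comp.1 hw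
  obtain ⟨p⟩ := hr
  let q := p.map (SimpleGraph.Hom.comap Subtype.val G)
  refine ⟨{x | x ∈ q.support}, ?_, q.start_mem_support, q.end_mem_support, ?_⟩
  · intro x hx
    simp only [q, Set.mem_setOf_eq] at hx
    erw [Walk.support_map, List.mem_map] at hx
    obtain ⟨y, hy, rfl⟩ := hx
    exact mem_Comp.2 ⟨y.2, hvD, y.2, ⟨p.takeUntil y hy⟩⟩
  · exact q.connected_induce_support.preconnected _ _

end Helpers

/-- A connected graph on at least `k+1` vertices is `k`-vertex-connected iff
every connected cut `S` satisfies `|Γ(S)| ≥ min {k, |V ∖ S|}`. -/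
theorem vertexConnected_iff_connectedCuts
    (k : ℕ) (hk : 1 ≤ k) (G : SimpleGraph V) [DecidableRel G.Adj]
    (hG : G.Connected) (hcard : k + 1 ≤ Fintype.card V) :
    (∀ X : Finset V, X.card ≤ k - 1 → (G.induce ((Xᶜ : Finset V) : Set V)).Connected) ↔
      ∀ S : Finset V, S.Nonempty → S ≠ Finset.univ →
        (G.induce (S : Set V)).Connected →
        (G.induce ((Sᶜ : Finset V) : Set V)).Connected →
        min k (Sᶜ : Finset V).card ≤
          ((Sᶜ : Finset V).filter (fun v => ∃ u ∈ S, G.Adj u v)).card := by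
  constructor
  · -- forward direction
    intro hLHS S hSne hSuniv hconnS hconnSc
    by_contra hlt
    push_neg at hlt
    set Γ : Finset V := (Sᶜ).filter (fun v => ∃ u ∈ S, G.Adj u v) with hΓdef
    have hΓS : Γ ⊆ Sᶜ := filter_subset _ _
    have hΓk : Γ.card ≤ k - 1 := by
      have := lt_min_iff.1 hlt
      omega
    have hconn := hLHS Γ hΓk
    obtain ⟨a, haS⟩ := hSne
    have haΓ : a ∉ Γ := fun h => (mem_compl.1 (hΓS h)) haS
    have haΓc : a ∈ ((Γᶜ : Finset V) : Set V) := by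
      simpa using haΓ
    obtain ⟨b, hbmem⟩ : ((Sᶜ) \ Γ).Nonempty := by
      rw [Finset.sdiff_nonempty]
      intro hsub
      have := card_le_card hsub
      have := lt_min_iff.1 hlt
      omega
    obtain ⟨hbSc, hbΓ⟩ := Finset.mem_sdiff.1 hbmem
    have hbΓc : b ∈ ((Γᶜ : Finset V) : Set V) := by simpa using hbΓ
    obtain ⟨u, w, hu, hw, hws, hadj⟩ :=
      cross_lemma haΓc hbΓc hconn (↑S) (by simpa using haS) (by simpa using mem_compl.1 hbSc)
    have hwΓ : w ∈ Γ := by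
      rw [hΓdef, mem_filter]
      exact ⟨mem_compl.2 (by simpa using hw), u, by simpa using hu, hadj⟩
    simp only [Finset.coe_compl, Set.mem_compl_iff, Finset.mem_coe] at hws
    exact hws hwΓ
  · -- backward direction
    intro hRHS
    suffices H : ∀ n (X : Finset V), X.card = n → X.card ≤ k - 1 →
        (G.induce ((Xᶜ : Finset V) : Set V)).Connected by
      intro X hX; exact H X.card X rfl hX
    intro n
    induction n using Nat.strong_induction_on with
    | _ n IH =>
    intro X hXn hXk
    by_contra hdis
    have hXne : X.Nonempty := by
      rcases X.eq_empty_or_nonempty with rfl | h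
      · exfalso
        apply hdis
        have : ((∅ᶜ : Finset V) : Set V) = Set.univ := by simp
        rw [this]
        exact (Iso.connected_iff (induceUnivIso G)).2 hG
      · exact h
    set D : Finset V := Xᶜ with hDdef
    have hDcard : 2 ≤ D.card := by
      have h1 : D.card = Fintype.card V - X.card := by rw [hDdef, Finset.card_compl]
      have h2 : X.card ≤ Fintype.card V := by
        simpa using card_le_card (subset_univ X)
      omega
    have hDnon : ((D : Finset V) : Set V).Nonempty := by
      have : D.Nonempty := card_pos.1 (by omega)
      exact ⟨this.choose, this.choose_spec⟩
    have hnpre : ¬ (G.induce (D : Set V)).Preconnected := by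
      intro h
      have := hDnon.to_subtype
      exact hdis ⟨h⟩
    simp only [Preconnected, not_forall] at hnpre
    obtain ⟨a', b', hnr⟩ := hnpre
    set a : V := ↑a' with hadef
    set b : V := ↑b' with hbdef
    have haD : a ∈ D := a'.2
    have hbD : b ∈ D := b'.2
    set S : Finset V := Comp G D a with hSdef
    have hbS : b ∉ S := by
      intro h
      obtain ⟨_, _, _, hr⟩ := mem_Comp.1 h
      exact hnr hr
    -- key claim: every x ∈ X is adjacent to every component of G[D]
    have key : ∀ x ∈ X, ∀ v ∈ D, ∃ u ∈ Comp G D v, G.Adj x u := by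
      intro x hx v hv
      have hlt : (X.erase x).card < n := hXn ▸ Finset.card_erase_lt_of_mem hx
      have hconn' := IH _ hlt (X.erase x) rfl (by have := Finset.card_erase_lt_of_mem hx; omega)
      obtain ⟨w, hwD, hwC⟩ : ∃ w ∈ D, w ∉ Comp G D v := by
        by_cases hva : a ∈ Comp G D v
        · refine ⟨b, hbD, fun h => hbS ?_⟩
          obtain ⟨_, hr1⟩ := mem_Comp.1 hva
          obtain ⟨_, hr2⟩ := mem_Comp.1 h
          exact mem_Comp.2 ⟨hbD, hr1.symm'.trans' hr2⟩
        · exact ⟨a, haD, hva⟩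
      have hDsub : D ⊆ (X.erase x)ᶜ := by
        intro y hy
        simp only [mem_compl, mem_erase] at *
        exact fun hc => (mem_compl.1 hy) hc.2
      have hv' : v ∈ (((X.erase x)ᶜ : Finset V) : Set V) := by
        exact Finset.mem_coe.2 (hDsub hv)
      have hw' : w ∈ (((X.erase x)ᶜ : Finset V) : Set V) := Finset.mem_coe.2 (hDsub hwD)
      obtain ⟨u, w', hu, hw'', hw's, hadj⟩ :=
        cross_lemma hv' hw' hconn' (↑(Comp G D v))
          (Finset.mem_coe.2 (mem_Comp_self hv)) (fun h => hwC (Finset.mem_coe.1 h))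
      have huC : u ∈ Comp G D v := Finset.mem_coe.1 hu
      by_cases hw'D : w' ∈ D
      · exact absurd (Comp_closure huC hw'D hadj) (fun h => hw'' (Finset.mem_coe.2 h))
      · have hw'X : w' ∈ X := by
          simp only [hDdef, mem_compl, not_not] at hw'D
          exact hw'D
        have hw'x : w' = x := by
          have := Finset.mem_coe.1 hw's
          simp only [mem_compl, mem_erase, not_and] at this
          by_contra hne
          exact this hne hw'X
        exact ⟨u, huC, hw'x ▸ hadj.symm⟩
    obtain ⟨x₀, hx₀⟩ := hXne
    have hXS : ∀ x ∈ X, x ∉ S := by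
      intro x hx h
      exact (mem_compl.1 (Comp_subset h)) hx
    have hCsub : ∀ v ∈ D, v ∉ S → ∀ w ∈ Comp G D v, w ∉ S := by
      intro v hv hvS w hw hwS
      obtain ⟨hwD, hr1⟩ := mem_Comp.1 hw
      obtain ⟨_, hr2⟩ := mem_Comp.1 hwS
      exact hvS (mem_Comp.2 ⟨hv, hr2.trans' hr1.symm'⟩)
    have hbSc : b ∈ ((Sᶜ : Finset V) : Set V) := by simpa using hbS
    have hScconn : (G.induce ((Sᶜ : Finset V) : Set V)).Connected := by
      apply G.induce_connected_of_patches b hbSc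
      intro v hv
      have hvS : v ∉ S := by simpa using hv
      obtain ⟨u1, hu1, hadj1⟩ := key x₀ hx₀ b hbD
      have hx₀S : x₀ ∉ S := hXS x₀ hx₀
      have htconn : (G.induce ({x₀} ∪ ↑(Comp G D b) : Set V)).Connected :=
        connected_induce_union (induce_singleton_connected x₀).preconnected (Comp_connected hbD).preconnected
          rfl (Finset.mem_coe.2 hu1) hadj1
      have htsub : ({x₀} ∪ ↑(Comp G D b) : Set V) ⊆ ((Sᶜ : Finset V) : Set V) := by
        rintro y (rfl | hy)
        · simpa using hx₀S
        · simpa using hCsub b hbD hbS y (Finset.mem_coe.1 hy)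
      have hbt : b ∈ ({x₀} ∪ ↑(Comp G D b) : Set V) :=
        Or.inr (Finset.mem_coe.2 (mem_Comp_self hbD))
      by_cases hvD : v ∈ D
      · obtain ⟨u2, hu2, hadj2⟩ := key x₀ hx₀ v hvD
        have hsconn := connected_induce_union (Comp_connected hvD).preconnected htconn.preconnected
          (Finset.mem_coe.2 hu2) (Or.inl rfl) hadj2.symm
        refine ⟨↑(Comp G D v) ∪ ({x₀} ∪ ↑(Comp G D b)), ?_, hbt.elim (fun h => Or.inr (Or.inl h)) (fun h => Or.inr (Or.inr h)), Or.inl (Finset.mem_coe.2 (mem_Comp_self hvD)), hsconn.preconnected _ _⟩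
        rintro y (hy | hy)
        · simpa using hCsub v hvD hvS y (Finset.mem_coe.1 hy)
        · exact htsub hy
      · have hvX : v ∈ X := by
          simp only [hDdef, mem_compl, not_not] at hvD
          exact hvD
        obtain ⟨u3, hu3, hadj3⟩ := key v hvX b hbD
        have hsconn : (G.induce ({v} ∪ ↑(Comp G D b) : Set V)).Connected :=
          connected_induce_union (induce_singleton_connected v).preconnected (Comp_connected hbD).preconnected
            rfl (Finset.mem_coe.2 hu3) hadj3
        refine ⟨{v} ∪ ↑(Comp G D b), ?_, Or.inr (Finset.mem_coe.2 (mem_Comp_self hbD)), Or.inl rfl, hsconn.preconnected _ _⟩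
        rintro y (rfl | hy)
        · simpa using hvS
        · simpa using hCsub b hbD hbS y (Finset.mem_coe.1 hy)
    have hSne : S.Nonempty := ⟨a, mem_Comp_self haD⟩
    have hSuniv : S ≠ Finset.univ := fun h => hbS (h ▸ mem_univ b)
    have hmain := hRHS S hSne hSuniv (Comp_connected haD) hScconn
    have hΓX : (Sᶜ).filter (fun v => ∃ u ∈ S, G.Adj u v) ⊆ X := by
      intro w hw
      obtain ⟨hwSc, u, hu, hadj⟩ := mem_filter.1 hw
      by_contra hwX
      have hwD : w ∈ D := mem_compl.2 hwX
      exact (mem_compl.1 hwSc) (Comp_closure hu hwD hadj)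
    have h1 := card_le_card hΓX
    have h2 : X.card + 1 ≤ (Sᶜ).card := by
      have hbX : b ∉ X := mem_compl.1 hbD
      have hins : insert b X ⊆ Sᶜ :=
        insert_subset (mem_compl.2 hbS) (fun x hx => mem_compl.2 (hXS x hx))
      have := card_le_card hins
      rwa [card_insert_of_notMem hbX] at this
    rcases le_total k ((Sᶜ).card) with hle | hle
    · rw [min_eq_left hle] at hmain; omega
    · rw [min_eq_right hle] at hmain; omega
end

section
/- Let k ≥ 1, let G be a k-edge-connected finite simple graph on V, fix a root r ∈ V, let u be a snug vertex with snug shores (S₁, S₂), and let S ⊆ V∖{r} be a nonempty k-cut. Then S ⊆ S₁, or S₂ ⊆ S, or S₂ ∩ S = ∅. -/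
open Finset

variable {V : Type*} [Fintype V] [DecidableEq V]

lemma crosses_iff' (S : Finset V) (x y : V) :
    Crosses S s(x, y) ↔ (x ∈ S ∧ y ∉ S) ∨ (y ∈ S ∧ x ∉ S) := by
  constructor
  · rintro ⟨a, b, hab, ha, hb⟩
    rw [Sym2.eq_iff] at hab
    rcases hab with ⟨rfl, rfl⟩ | ⟨rfl, rfl⟩
    · exact Or.inl ⟨ha, hb⟩
    · exact Or.inr ⟨ha, hb⟩
  · rintro (⟨h1, h2⟩ | ⟨h1, h2⟩)
    · exact ⟨x, y, rfl, h1, h2⟩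
    · exact ⟨y, x, Sym2.eq_swap, h1, h2⟩

lemma cutEdges_card_eq_sum (G : SimpleGraph V) [DecidableRel G.Adj] (X : Finset V) :
    (cutEdges G X).card = ∑ e ∈ G.edgeFinset, if Crosses X e then 1 else 0 :=
  Finset.card_filter _ _

lemma cutEdges_submod (G : SimpleGraph V) [DecidableRel G.Adj] (X Y : Finset V) :
    (cutEdges G (X ∩ Y)).card + (cutEdges G (X ∪ Y)).card ≤
      (cutEdges G X).card + (cutEdges G Y).card := by
  simp only [cutEdges_card_eq_sum, ← Finset.sum_add_distrib]
  apply Finset.sum_le_sum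
  intro e _
  induction e using Sym2.ind with
  | _ x y =>
    simp only [crosses_iff', Finset.mem_inter, Finset.mem_union]
    by_cases h1 : x ∈ X <;> by_cases h2 : x ∈ Y <;> by_cases h3 : y ∈ X <;>
      by_cases h4 : y ∈ Y <;> simp [h1, h2, h3, h4]

lemma cutEdges_posimod (G : SimpleGraph V) [DecidableRel G.Adj] (X Y : Finset V) :
    (cutEdges G (X \ Y)).card + (cutEdges G (Y \ X)).card ≤
      (cutEdges G X).card + (cutEdges G Y).card := by
  simp only [cutEdges_card_eq_sum, ← Finset.sum_add_distrib]
  apply Finset.sum_le_sum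
  intro e _
  induction e using Sym2.ind with
  | _ x y =>
    simp only [crosses_iff', Finset.mem_sdiff]
    by_cases h1 : x ∈ X <;> by_cases h2 : x ∈ Y <;> by_cases h3 : y ∈ X <;>
      by_cases h4 : y ∈ Y <;> simp [h1, h2, h3, h4]

lemma cutEdges_singleton (G : SimpleGraph V) [DecidableRel G.Adj] (u : V) :
    (cutEdges G {u}).card = G.degree u := by
  rw [← SimpleGraph.card_incidenceFinset_eq_degree]
  congr 1
  ext e
  induction e using Sym2.ind with
  | _ x y =>
    simp only [cutEdges, Finset.mem_filter, SimpleGraph.mem_incidenceFinset,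
      SimpleGraph.mk'_mem_incidenceSet_iff, crosses_iff', Finset.mem_singleton,
      SimpleGraph.mem_edgeFinset, SimpleGraph.mem_edgeSet, Sym2.mem_iff]
    constructor
    · rintro ⟨hadj, (⟨rfl, hy⟩ | ⟨rfl, hx⟩)⟩
      · exact ⟨hadj, Or.inl rfl⟩
      · exact ⟨hadj, Or.inr rfl⟩
    · rintro ⟨hadj, (rfl | rfl)⟩
      · exact ⟨hadj, Or.inl ⟨rfl, fun h => hadj.ne h.symm⟩⟩
      · exact ⟨hadj, Or.inr ⟨rfl, fun h => hadj.ne h⟩⟩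

/-- No `k`-cut avoiding the root can cross snug shores: if `(S₁, S₂)` are snug
shores for `u` and `S ⊆ V∖{r}` is a `k`-cut, then `S ⊆ S₁`, or `S₂ ⊆ S`,
or `S₂ ∩ S = ∅`. -/
theorem kcut_interaction_with_snugShores
    (k : ℕ) (hk : 1 ≤ k) (G : SimpleGraph V) [DecidableRel G.Adj]
    (hG : EdgeConnected G k) (r u : V) (hu : Snug G k r u)
    (S₁ S₂ : Finset V) (hshores : SnugShores G k r u S₁ S₂)
    (S : Finset V) (hS : IsCut G k S) (hrS : r ∉ S) :
    S ⊆ S₁ ∨ S₂ ⊆ S ∨ S₂ ∩ S = ∅ := by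
  obtain ⟨hS₁cut, hS₂cut, hrS₁, hrS₂, huS₁, hS₂eq⟩ := hshores
  obtain ⟨hu_ne, hdeg, -⟩ := hu
  obtain ⟨hSne, hSuniv, hScard⟩ := hS
  obtain ⟨hS₁ne, hS₁univ, h1card⟩ := hS₁cut
  obtain ⟨hS₂ne, hS₂univ, h2card⟩ := hS₂cut
  have huS₂ : u ∈ S₂ := hS₂eq ▸ Finset.mem_insert_self u S₁
  have hge : ∀ X : Finset V, X.Nonempty → r ∉ X → k ≤ (cutEdges G X).card :=
    fun X hne hr => hG X hne (fun h => hr (h ▸ Finset.mem_univ r))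
  have hdegu : k + 1 ≤ (cutEdges G {u}).card := by
    rw [cutEdges_singleton]; exact hdeg
  by_cases huS : u ∈ S
  · -- u ∈ S: show S₂ ⊆ S
    refine Or.inr (Or.inl ?_)
    by_contra hns
    have hC : (S₁ \ S).Nonempty := by
      rw [hS₂eq] at hns
      rcases Finset.not_subset.mp hns with ⟨c, hc, hcs⟩
      rcases Finset.mem_insert.mp hc with rfl | hc1
      · exact absurd huS hcs
      · exact ⟨c, Finset.mem_sdiff.mpr ⟨hc1, hcs⟩⟩
    have h1 : (cutEdges G (S \ S₁)).card + (cutEdges G (S₁ \ S)).card ≤ k + k := by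
      have := cutEdges_posimod G S S₁
      omega
    have h2 : k ≤ (cutEdges G (S₁ \ S)).card :=
      hge _ hC (fun h => hrS₁ (Finset.mem_sdiff.mp h).1)
    have hinter : (S \ S₁) ∩ S₂ = {u} := by
      ext x
      simp only [hS₂eq, Finset.mem_inter, Finset.mem_sdiff, Finset.mem_insert,
        Finset.mem_singleton]
      constructor
      · rintro ⟨⟨hxS, hxS₁⟩, (rfl | h)⟩
        · rfl
        · exact absurd h hxS₁
      · rintro rfl
        exact ⟨⟨huS, huS₁⟩, Or.inl rfl⟩
    have hunion : k ≤ (cutEdges G ((S \ S₁) ∪ S₂)).card := by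
      refine hge _ ⟨u, Finset.mem_union_right _ huS₂⟩ ?_
      simp only [Finset.mem_union, Finset.mem_sdiff, not_or]
      exact ⟨fun h => hrS h.1, hrS₂⟩
    have hsub := cutEdges_submod G (S \ S₁) S₂
    rw [hinter] at hsub
    omega
  · -- u ∉ S
    by_cases hA : S₂ ∩ S = ∅
    · exact Or.inr (Or.inr hA)
    left
    by_contra hB
    have hBne : (S \ S₂).Nonempty := by
      rcases Finset.not_subset.mp hB with ⟨b, hb, hb1⟩
      refine ⟨b, Finset.mem_sdiff.mpr ⟨hb, ?_⟩⟩
      rw [hS₂eq, Finset.mem_insert, not_or]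
      exact ⟨fun h => huS (h ▸ hb), hb1⟩
    have h1 : (cutEdges G (S₂ \ S)).card + (cutEdges G (S \ S₂)).card ≤ k + k := by
      have := cutEdges_posimod G S₂ S
      omega
    have h2 : k ≤ (cutEdges G (S \ S₂)).card :=
      hge _ hBne (fun h => hrS (Finset.mem_sdiff.mp h).1)
    have h3 : (cutEdges G (S₂ \ S)).card ≤ k := by omega
    have hset1 : (S₂ \ S) \ S₁ = {u} := by
      ext x
      simp only [hS₂eq, Finset.mem_sdiff, Finset.mem_insert, Finset.mem_singleton]
      constructor
      · rintro ⟨⟨(rfl | h), _⟩, hx1⟩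
        · rfl
        · exact absurd h hx1
      · rintro rfl
        exact ⟨⟨Or.inl rfl, huS⟩, huS₁⟩
    have hset2 : S₁ \ (S₂ \ S) = S₁ ∩ S := by
      ext x
      simp only [hS₂eq, Finset.mem_sdiff, Finset.mem_inter, Finset.mem_insert, not_and, not_not]
      constructor
      · rintro ⟨hx1, h⟩
        exact ⟨hx1, h (Or.inr hx1)⟩
      · rintro ⟨hx1, hxS⟩
        exact ⟨hx1, fun _ => hxS⟩
    have hAne : (S₁ ∩ S).Nonempty := by
      rcases Finset.nonempty_iff_ne_empty.mpr hA with ⟨a, ha⟩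
      rw [Finset.mem_inter, hS₂eq, Finset.mem_insert] at ha
      rcases ha.1 with rfl | ha1
      · exact absurd ha.2 huS
      · exact ⟨a, Finset.mem_inter.mpr ⟨ha1, ha.2⟩⟩
    have h5 : k ≤ (cutEdges G (S₁ ∩ S)).card :=
      hge _ hAne (fun h => hrS₁ (Finset.mem_inter.mp h).1)
    have hposi := cutEdges_posimod G (S₂ \ S) S₁
    rw [hset1, hset2] at hposi
    omega
end

section
/- Let k ≥ 1, let G be a k-edge-connected finite simple graph on V, fix a root r ∈ V, and let u be a snug vertex. If (S₁, S₂) and (T₁, T₂) are both snug shores for u, then S₁ = T₁ and S₂ = T₂; that is, every snug vertex has unique snug shores. -/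
open Finset

variable {V : Type*} [Fintype V] [DecidableEq V]

section Aux

variable {V : Type*} [Fintype V] [DecidableEq V]

set_option linter.unusedSectionVars false

lemma part1 (S T : Finset V) : S = (S \ T) ∪ (S ∩ T) := by
  ext x; by_cases h1 : x ∈ S <;> by_cases h2 : x ∈ T <;> simp_all

lemma part2 (S T : Finset V) : T = (S ∩ T) ∪ (T \ S) := by
  ext x; by_cases h1 : x ∈ S <;> by_cases h2 : x ∈ T <;> simp_all

lemma part3 (u : V) (S T : Finset V) (hS : u ∉ S) :
    Sᶜ = (T \ S) ∪ ({u} ∪ (insert u (S ∪ T))ᶜ) := by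
  ext x
  by_cases h0 : x = u <;> by_cases h1 : x ∈ S <;> by_cases h2 : x ∈ T <;> simp_all

lemma part4 (u : V) (S T : Finset V) (hS : u ∉ S) (hT : u ∉ T) :
    (insert u S)ᶜ = (T \ S) ∪ (insert u (S ∪ T))ᶜ := by
  ext x
  by_cases h0 : x = u <;> by_cases h1 : x ∈ S <;> by_cases h2 : x ∈ T <;> simp_all

lemma part5 (u : V) (S T : Finset V) :
    insert u S = ((S \ T) ∪ (S ∩ T)) ∪ {u} := by
  ext x
  by_cases h0 : x = u <;> by_cases h1 : x ∈ S <;> by_cases h2 : x ∈ T <;> simp_all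

lemma part6 (u : V) (S T : Finset V) (hS : u ∉ S) (hT : u ∉ T) :
    (S \ T)ᶜ = (S ∩ T) ∪ ((T \ S) ∪ ({u} ∪ (insert u (S ∪ T))ᶜ)) := by
  ext x
  by_cases h0 : x = u <;> by_cases h1 : x ∈ S <;> by_cases h2 : x ∈ T <;> simp_all

lemma part7 (u : V) (S T : Finset V) (hS : u ∉ S) (hT : u ∉ T) :
    ({u} : Finset V)ᶜ = (S \ T) ∪ ((S ∩ T) ∪ ((T \ S) ∪ (insert u (S ∪ T))ᶜ)) := by
  ext x
  by_cases h0 : x = u <;> by_cases h1 : x ∈ S <;> by_cases h2 : x ∈ T <;> simp_all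

lemma part8 (u : V) (S T : Finset V) :
    insert u (S ∪ T) = (((S \ T) ∪ (S ∩ T)) ∪ (T \ S)) ∪ {u} := by
  ext x
  by_cases h0 : x = u <;> by_cases h1 : x ∈ S <;> by_cases h2 : x ∈ T <;> simp_all

lemma part5b (u : V) (S T : Finset V) :
    insert u T = ((S ∩ T) ∪ (T \ S)) ∪ {u} := by
  ext x
  by_cases h0 : x = u <;> by_cases h1 : x ∈ S <;> by_cases h2 : x ∈ T <;> simp_all

lemma part6b (u : V) (S T : Finset V) (hS : u ∉ S) (hT : u ∉ T) :
    (T \ S)ᶜ = (S \ T) ∪ ((S ∩ T) ∪ ({u} ∪ (insert u (S ∪ T))ᶜ)) := by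
  ext x
  by_cases h0 : x = u <;> by_cases h1 : x ∈ S <;> by_cases h2 : x ∈ T <;> simp_all

/-- Number of ordered adjacent pairs with first coordinate in `A`, second in `B`. -/
def ecnt (G : SimpleGraph V) [DecidableRel G.Adj] (A B : Finset V) : ℕ :=
  (Finset.univ.filter fun p : V × V => G.Adj p.1 p.2 ∧ p.1 ∈ A ∧ p.2 ∈ B).card

lemma ecnt_comm (G : SimpleGraph V) [DecidableRel G.Adj] (A B : Finset V) :
    ecnt G A B = ecnt G B A := by
  unfold ecnt
  apply Finset.card_bij (fun p _ => p.swap)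
  · intro p hp
    simp only [Finset.mem_filter, Finset.mem_univ, true_and] at hp ⊢
    exact ⟨hp.1.symm, hp.2.2, hp.2.1⟩
  · intro p hp q hq h
    exact Prod.swap_injective h
  · intro p hp
    simp only [Finset.mem_filter, Finset.mem_univ, true_and] at hp ⊢
    exact ⟨p.swap, ⟨hp.1.symm, hp.2.2, hp.2.1⟩, by simp⟩

lemma ecnt_empty_left (G : SimpleGraph V) [DecidableRel G.Adj] (B : Finset V) :
    ecnt G ∅ B = 0 := by
  unfold ecnt
  rw [Finset.card_eq_zero]
  ext p; simp

lemma ecnt_empty_right (G : SimpleGraph V) [DecidableRel G.Adj] (A : Finset V) :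
    ecnt G A ∅ = 0 := by
  rw [ecnt_comm]; exact ecnt_empty_left G A

lemma ecnt_union_left (G : SimpleGraph V) [DecidableRel G.Adj] {A B : Finset V}
    (Y : Finset V) (h : Disjoint A B) :
    ecnt G (A ∪ B) Y = ecnt G A Y + ecnt G B Y := by
  unfold ecnt
  rw [← Finset.card_union_of_disjoint]
  · congr 1
    ext p
    simp only [Finset.mem_filter, Finset.mem_union, Finset.mem_univ, true_and]
    tauto
  · rw [Finset.disjoint_left]
    intro p hp hq
    simp only [Finset.mem_filter, Finset.mem_univ, true_and] at hp hq
    exact Finset.disjoint_left.mp h hp.2.1 hq.2.1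

lemma ecnt_union_right (G : SimpleGraph V) [DecidableRel G.Adj] {A B : Finset V}
    (X : Finset V) (h : Disjoint A B) :
    ecnt G X (A ∪ B) = ecnt G X A + ecnt G X B := by
  rw [ecnt_comm, ecnt_union_left G X h, ecnt_comm G A X, ecnt_comm G B X]

lemma cutEdges_card_eq (G : SimpleGraph V) [DecidableRel G.Adj] (S : Finset V) :
    (cutEdges G S).card = ecnt G S Sᶜ := by
  unfold cutEdges ecnt
  symm
  apply Finset.card_bij (fun p _ => s(p.1, p.2))
  · intro p hp
    simp only [Finset.mem_filter, Finset.mem_univ, Finset.mem_compl, true_and] at hp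
    simp only [Finset.mem_filter, SimpleGraph.mem_edgeFinset, SimpleGraph.mem_edgeSet]
    exact ⟨hp.1, p.1, p.2, rfl, hp.2.1, hp.2.2⟩
  · intro p hp q hq h
    simp only [Finset.mem_filter, Finset.mem_univ, Finset.mem_compl, true_and] at hp hq
    rw [Sym2.eq_iff] at h
    rcases h with ⟨h1, h2⟩ | ⟨h1, h2⟩
    · exact Prod.ext h1 h2
    · exact absurd (h1 ▸ hp.2.1) hq.2.2
  · intro e he
    simp only [Finset.mem_filter, SimpleGraph.mem_edgeFinset] at he
    obtain ⟨x, y, rfl, hx, hy⟩ := he.2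
    refine ⟨(x, y), ?_, rfl⟩
    simp only [Finset.mem_filter, Finset.mem_univ, Finset.mem_compl, true_and]
    exact ⟨(SimpleGraph.mem_edgeSet G).mp he.1, hx, hy⟩

lemma degree_eq_ecnt (G : SimpleGraph V) [DecidableRel G.Adj] (u : V) :
    G.degree u = ecnt G {u} {u}ᶜ := by
  rw [← SimpleGraph.card_neighborFinset_eq_degree]
  unfold ecnt
  apply Finset.card_bij (fun y _ => (u, y))
  · intro y hy
    rw [SimpleGraph.mem_neighborFinset] at hy
    simp only [Finset.mem_filter, Finset.mem_univ, Finset.mem_compl,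
      Finset.mem_singleton, true_and]
    exact ⟨hy, (G.ne_of_adj hy).symm⟩
  · intro a ha b hb h
    exact (Prod.ext_iff.mp h).2
  · intro p hp
    simp only [Finset.mem_filter, Finset.mem_univ, Finset.mem_compl,
      Finset.mem_singleton, true_and] at hp
    refine ⟨p.2, ?_, ?_⟩
    · rw [SimpleGraph.mem_neighborFinset, ← hp.2.1]; exact hp.1
    · rw [Prod.ext_iff]; exact ⟨hp.2.1.symm, rfl⟩

lemma shores_subset (k : ℕ) (hk : 1 ≤ k) (G : SimpleGraph V) [DecidableRel G.Adj]
    (hG : EdgeConnected G k) (r u : V) (hru : u ≠ r) (hd : k + 1 ≤ G.degree u)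
    (S₁ S₂ T₁ T₂ : Finset V)
    (h₁ : SnugShores G k r u S₁ S₂) (h₂ : SnugShores G k r u T₁ T₂) :
    S₁ ⊆ T₁ := by
  obtain ⟨⟨hS1ne, hS1uv, hS1k⟩, ⟨hS2ne, hS2uv, hS2k⟩, hrS1, hrS2, huS1, hS2eq⟩ := h₁
  obtain ⟨⟨hT1ne, hT1uv, hT1k⟩, ⟨hT2ne, hT2uv, hT2k⟩, hrT1, hrT2, huT1, hT2eq⟩ := h₂
  by_contra hsub
  have hAne : (S₁ \ T₁).Nonempty := by
    rw [Finset.sdiff_nonempty]; exact hsub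
  set A := S₁ \ T₁ with hA
  set B := S₁ ∩ T₁ with hB
  set C := T₁ \ S₁ with hC
  set U : Finset V := {u} with hU
  set D := (insert u (S₁ ∪ T₁))ᶜ with hD
  clear_value A B C U D
  -- basic disjointness
  have dAB : Disjoint A B := by
    rw [Finset.disjoint_left]; intro x hx hx'
    rw [hA, Finset.mem_sdiff] at hx; rw [hB, Finset.mem_inter] at hx'; tauto
  have dAC : Disjoint A C := by
    rw [Finset.disjoint_left]; intro x hx hx'
    rw [hA, Finset.mem_sdiff] at hx; rw [hC, Finset.mem_sdiff] at hx'; tauto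
  have dBC : Disjoint B C := by
    rw [Finset.disjoint_left]; intro x hx hx'
    rw [hB, Finset.mem_inter] at hx; rw [hC, Finset.mem_sdiff] at hx'; tauto
  have dAU : Disjoint A U := by
    rw [Finset.disjoint_left]; intro x hx hx'
    rw [hA, Finset.mem_sdiff] at hx; rw [hU, Finset.mem_singleton] at hx'
    exact huS1 (hx' ▸ hx.1)
  have dBU : Disjoint B U := by
    rw [Finset.disjoint_left]; intro x hx hx'
    rw [hB, Finset.mem_inter] at hx; rw [hU, Finset.mem_singleton] at hx'
    exact huS1 (hx' ▸ hx.1)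
  have dCU : Disjoint C U := by
    rw [Finset.disjoint_left]; intro x hx hx'
    rw [hC, Finset.mem_sdiff] at hx; rw [hU, Finset.mem_singleton] at hx'
    exact huT1 (hx' ▸ hx.1)
  have dAD : Disjoint A D := by
    rw [Finset.disjoint_left]; intro x hx hx'
    rw [hA, Finset.mem_sdiff] at hx
    rw [hD, Finset.mem_compl, Finset.mem_insert, Finset.mem_union] at hx'; tauto
  have dBD : Disjoint B D := by
    rw [Finset.disjoint_left]; intro x hx hx'
    rw [hB, Finset.mem_inter] at hx
    rw [hD, Finset.mem_compl, Finset.mem_insert, Finset.mem_union] at hx'; tauto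
  have dCD : Disjoint C D := by
    rw [Finset.disjoint_left]; intro x hx hx'
    rw [hC, Finset.mem_sdiff] at hx
    rw [hD, Finset.mem_compl, Finset.mem_insert, Finset.mem_union] at hx'; tauto
  have dUD : Disjoint U D := by
    rw [Finset.disjoint_left]; intro x hx hx'
    rw [hU, Finset.mem_singleton] at hx
    rw [hD, Finset.mem_compl, Finset.mem_insert, Finset.mem_union] at hx'; tauto
  -- derived disjointness of unions
  have dUuD : Disjoint C (U ∪ D) := Finset.disjoint_union_right.mpr ⟨dCU, dCD⟩
  have dA_UD : Disjoint A (U ∪ D) := Finset.disjoint_union_right.mpr ⟨dAU, dAD⟩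
  have dB_UD : Disjoint B (U ∪ D) := Finset.disjoint_union_right.mpr ⟨dBU, dBD⟩
  have dB_rest : Disjoint B (C ∪ (U ∪ D)) := Finset.disjoint_union_right.mpr ⟨dBC, dB_UD⟩
  have dCD' : Disjoint C D := dCD
  -- set identities
  have eqS1 : S₁ = A ∪ B := by rw [hA, hB]; exact part1 S₁ T₁
  have eqT1 : T₁ = B ∪ C := by rw [hB, hC]; exact part2 S₁ T₁
  have eqS1c : S₁ᶜ = C ∪ (U ∪ D) := by
    rw [hC, hU, hD]; exact part3 u S₁ T₁ huS1
  have eqT1c : T₁ᶜ = A ∪ (U ∪ D) := by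
    rw [hA, hU, hD]
    have h := part3 u T₁ S₁ huT1
    rwa [Finset.union_comm T₁ S₁] at h
  have eqS2 : S₂ = (A ∪ B) ∪ U := by
    rw [hS2eq, hA, hB, hU]; exact part5 u S₁ T₁
  have eqS2c : S₂ᶜ = C ∪ D := by
    rw [hS2eq, hC, hD]; exact part4 u S₁ T₁ huS1 huT1
  have eqT2 : T₂ = (B ∪ C) ∪ U := by
    rw [hT2eq, hB, hC, hU]; exact part5b u S₁ T₁
  have eqT2c : T₂ᶜ = A ∪ D := by
    rw [hT2eq, hA, hD]
    have h := part4 u T₁ S₁ huT1 huS1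
    rwa [Finset.union_comm T₁ S₁] at h
  have eqAc : Aᶜ = B ∪ (C ∪ (U ∪ D)) := by
    rw [hA, hB, hC, hU, hD]; exact part6 u S₁ T₁ huS1 huT1
  have eqCc : Cᶜ = A ∪ (B ∪ (U ∪ D)) := by
    rw [hA, hB, hC, hU, hD]; exact part6b u S₁ T₁ huS1 huT1
  have eqUc : Uᶜ = A ∪ (B ∪ (C ∪ D)) := by
    rw [hA, hB, hC, hU, hD]; exact part7 u S₁ T₁ huS1 huT1
  have eqY : (insert u (S₁ ∪ T₁)) = ((A ∪ B) ∪ C) ∪ U := by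
    rw [hA, hB, hC, hU]; exact part8 u S₁ T₁
  have eqYc : (insert u (S₁ ∪ T₁))ᶜ = D := hD.symm
  -- cut equations
  have c1 : ecnt G A C + (ecnt G A U + ecnt G A D)
      + (ecnt G B C + (ecnt G B U + ecnt G B D)) = k := by
    have h := hS1k
    rw [cutEdges_card_eq, eqS1c, eqS1, ecnt_union_left G _ dAB,
      ecnt_union_right G A dUuD, ecnt_union_right G A dUD,
      ecnt_union_right G B dUuD, ecnt_union_right G B dUD] at h
    linarith [h]
  have c2 : ecnt G B A + (ecnt G B U + ecnt G B D)
      + (ecnt G C A + (ecnt G C U + ecnt G C D)) = k := by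
    have h := hT1k
    rw [cutEdges_card_eq, eqT1c, eqT1, ecnt_union_left G _ dBC,
      ecnt_union_right G B dA_UD, ecnt_union_right G B dUD,
      ecnt_union_right G C dA_UD, ecnt_union_right G C dUD] at h
    linarith [h]
  have c3 : ecnt G A C + ecnt G A D + (ecnt G B C + ecnt G B D)
      + (ecnt G U C + ecnt G U D) = k := by
    have h := hS2k
    rw [cutEdges_card_eq, eqS2c, eqS2,
      ecnt_union_left G _ (Finset.disjoint_union_left.mpr ⟨dAU, dBU⟩),
      ecnt_union_left G _ dAB,
      ecnt_union_right G A dCD, ecnt_union_right G B dCD,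
      ecnt_union_right G U dCD] at h
    linarith [h]
  have c4 : ecnt G B A + ecnt G B D + (ecnt G C A + ecnt G C D)
      + (ecnt G U A + ecnt G U D) = k := by
    have h := hT2k
    rw [cutEdges_card_eq, eqT2c, eqT2,
      ecnt_union_left G _ (Finset.disjoint_union_left.mpr ⟨dBU, dCU⟩),
      ecnt_union_left G _ dBC,
      ecnt_union_right G B dAD, ecnt_union_right G C dAD,
      ecnt_union_right G U dAD] at h
    linarith [h]
  have c5 : k + 1 ≤ ecnt G U A + (ecnt G U B + (ecnt G U C + ecnt G U D)) := by
    have h := hd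
    rw [degree_eq_ecnt, ← hU, eqUc,
      ecnt_union_right G U (Finset.disjoint_union_right.mpr
        ⟨dAB, Finset.disjoint_union_right.mpr ⟨dAC, dAD⟩⟩),
      ecnt_union_right G U (Finset.disjoint_union_right.mpr ⟨dBC, dBD⟩),
      ecnt_union_right G U dCD] at h
    linarith [h]
  -- lower bound for A
  have hAuniv : A ≠ Finset.univ := by
    intro h
    have : r ∈ A := h ▸ Finset.mem_univ r
    rw [hA, Finset.mem_sdiff] at this
    exact hrS1 this.1
  have c6 : k ≤ ecnt G A B + (ecnt G A C + (ecnt G A U + ecnt G A D)) := by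
    have h := hG A hAne hAuniv
    rw [cutEdges_card_eq, eqAc,
      ecnt_union_right G A dB_rest,
      ecnt_union_right G A dUuD, ecnt_union_right G A dUD] at h
    linarith [h]
  -- lower bound for Y = A ∪ B ∪ C ∪ U
  have hYne : (insert u (S₁ ∪ T₁)).Nonempty := ⟨u, Finset.mem_insert_self u _⟩
  have hYuniv : (insert u (S₁ ∪ T₁)) ≠ Finset.univ := by
    intro h
    have : r ∈ insert u (S₁ ∪ T₁) := h ▸ Finset.mem_univ r
    rw [Finset.mem_insert, Finset.mem_union] at this
    rcases this with h' | h' | h'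
    · exact hru h'.symm
    · exact hrS1 h'
    · exact hrT1 h'
  have c7 : k ≤ ecnt G A D + ecnt G B D + ecnt G C D + ecnt G U D := by
    have h := hG _ hYne hYuniv
    rw [cutEdges_card_eq, eqYc, eqY,
      ecnt_union_left G _ (Finset.disjoint_union_left.mpr
        ⟨Finset.disjoint_union_left.mpr ⟨dAU, dBU⟩, dCU⟩),
      ecnt_union_left G _ (Finset.disjoint_union_left.mpr ⟨dAC, dBC⟩),
      ecnt_union_left G _ dAB] at h
    linarith [h]
  -- symmetry facts
  have sAB := ecnt_comm G A B
  have sAC := ecnt_comm G A C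
  have sAU := ecnt_comm G A U
  have sAD := ecnt_comm G A D
  have sBC := ecnt_comm G B C
  have sBU := ecnt_comm G B U
  have sBD := ecnt_comm G B D
  have sCU := ecnt_comm G C U
  have sCD := ecnt_comm G C D
  have sUD := ecnt_comm G U D
  rcases Finset.eq_empty_or_nonempty C with hCe | hCne
  · have z1 : ecnt G A C = 0 := by rw [hCe]; exact ecnt_empty_right G A
    have z2 : ecnt G B C = 0 := by rw [hCe]; exact ecnt_empty_right G B
    have z3 : ecnt G U C = 0 := by rw [hCe]; exact ecnt_empty_right G U
    have z4 : ecnt G C A = 0 := by rw [hCe]; exact ecnt_empty_left G A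
    have z5 : ecnt G C U = 0 := by rw [hCe]; exact ecnt_empty_left G U
    have z6 : ecnt G C D = 0 := by rw [hCe]; exact ecnt_empty_left G D
    omega
  · have hCuniv : C ≠ Finset.univ := by
      intro h
      have : r ∈ C := h ▸ Finset.mem_univ r
      rw [hC, Finset.mem_sdiff] at this
      exact hrT1 this.1
    have c8 : k ≤ ecnt G C A + (ecnt G C B + (ecnt G C U + ecnt G C D)) := by
      have h := hG C hCne hCuniv
      rw [cutEdges_card_eq, eqCc,
        ecnt_union_right G C (Finset.disjoint_union_right.mpr
          ⟨dAB, Finset.disjoint_union_right.mpr ⟨dAU, dAD⟩⟩),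
        ecnt_union_right G C dB_UD, ecnt_union_right G C dUD] at h
      linarith [h]
    have sCB := ecnt_comm G C B
    omega

end Aux

/-- Every snug vertex has unique snug shores. -/
theorem snugShores_unique
    (k : ℕ) (hk : 1 ≤ k) (G : SimpleGraph V) [DecidableRel G.Adj]
    (hG : EdgeConnected G k) (r u : V) (hu : Snug G k r u)
    (S₁ S₂ T₁ T₂ : Finset V)
    (h₁ : SnugShores G k r u S₁ S₂) (h₂ : SnugShores G k r u T₁ T₂) :
    S₁ = T₁ ∧ S₂ = T₂ := by
  obtain ⟨hru, hd, -⟩ := hu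
  have hst : S₁ ⊆ T₁ := shores_subset k hk G hG r u hru hd S₁ S₂ T₁ T₂ h₁ h₂
  have hts : T₁ ⊆ S₁ := shores_subset k hk G hG r u hru hd T₁ T₂ S₁ S₂ h₂ h₁
  have h11 : S₁ = T₁ := Finset.Subset.antisymm hst hts
  refine ⟨h11, ?_⟩
  rw [h₁.2.2.2.2.2, h₂.2.2.2.2.2, h11]
end

section
/- Let k ≥ 1, let G be a k-edge-connected finite simple graph on V, and fix a root r ∈ V. If u and v are snug vertices with snug shores (S₁ᵘ, S₂ᵘ) and (S₁ᵛ, S₂ᵛ) respectively, and S₂ᵘ = S₁ᵛ, then u and v are adjacent in G. (In particular, the underlying undirected graph of the chain graph is a subgraph of G.) -/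
open Finset

variable {V : Type*} [Fintype V] [DecidableEq V]

lemma aux1 (G : SimpleGraph V) [DecidableRel G.Adj] (u : V) (S : Finset V) (hu : u ∉ S) :
    (G.neighborFinset u ∩ S).image (fun w => s(u, w)) =
      (cutEdges G S).filter (fun e => u ∈ e) := by
  ext e
  simp only [mem_image, mem_inter, SimpleGraph.mem_neighborFinset, cutEdges, mem_filter,
    SimpleGraph.mem_edgeFinset]
  simp only [Crosses]
  constructor
  · rintro ⟨w, ⟨hadj, hwS⟩, rfl⟩
    exact ⟨⟨hadj, w, u, Sym2.eq_swap, hwS, hu⟩, Sym2.mem_mk_left u w⟩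
  · rintro ⟨⟨he, x, y, rfl, hxS, hyS⟩, hue⟩
    rcases Sym2.mem_iff.mp hue with rfl | rfl
    · exact absurd hxS hu
    · exact ⟨x, ⟨(G.mem_edgeSet.mp he).symm, hxS⟩, Sym2.eq_swap⟩

lemma aux2 (G : SimpleGraph V) [DecidableRel G.Adj] (u : V) (S : Finset V) (hu : u ∈ S) :
    ((G.neighborFinset u \ S)).image (fun w => s(u, w)) =
      (cutEdges G S).filter (fun e => u ∈ e) := by
  ext e
  simp only [mem_image, mem_sdiff, SimpleGraph.mem_neighborFinset, cutEdges, mem_filter,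
    SimpleGraph.mem_edgeFinset]
  simp only [Crosses]
  constructor
  · rintro ⟨w, ⟨hadj, hwS⟩, rfl⟩
    exact ⟨⟨hadj, u, w, rfl, hu, hwS⟩, Sym2.mem_mk_left u w⟩
  · rintro ⟨⟨he, x, y, rfl, hxS, hyS⟩, hue⟩
    rcases Sym2.mem_iff.mp hue with rfl | rfl
    · exact ⟨y, ⟨G.mem_edgeSet.mp he, hyS⟩, rfl⟩
    · exact absurd hu hyS

lemma aux3 (G : SimpleGraph V) [DecidableRel G.Adj] (u : V) (S : Finset V) :
    (cutEdges G S).filter (fun e => u ∉ e) =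
      (cutEdges G (insert u S)).filter (fun e => u ∉ e) := by
  ext e
  simp only [cutEdges, mem_filter, SimpleGraph.mem_edgeFinset]
  simp only [Crosses]
  constructor
  · rintro ⟨⟨he, x, y, rfl, hxS, hyS⟩, hue⟩
    refine ⟨⟨he, x, y, rfl, mem_insert_of_mem hxS, ?_⟩, hue⟩
    simp only [mem_insert]
    rintro (rfl | h)
    · exact hue (Sym2.mem_mk_right x y)
    · exact hyS h
  · rintro ⟨⟨he, x, y, rfl, hxS, hyS⟩, hue⟩
    refine ⟨⟨he, x, y, rfl, ?_, fun h => hyS (mem_insert_of_mem h)⟩, hue⟩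
    rcases mem_insert.mp hxS with rfl | h
    · exact absurd (Sym2.mem_mk_left x y) hue
    · exact h

omit [Fintype V] [DecidableEq V] in
lemma sym2_inj (u : V) : Function.Injective (fun w : V => s(u, w)) := fun _ _ h =>
  (Sym2.congr_right).mp h

lemma card_cut_not_mem (G : SimpleGraph V) [DecidableRel G.Adj] (u : V) (S : Finset V)
    (hu : u ∉ S) :
    (cutEdges G S).card =
      (G.neighborFinset u ∩ S).card + ((cutEdges G S).filter (fun e => u ∉ e)).card := by
  rw [← card_filter_add_card_filter_not (s := cutEdges G S) (p := fun e => u ∈ e),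
    ← aux1 G u S hu, card_image_of_injective _ (sym2_inj u)]

lemma card_cut_mem (G : SimpleGraph V) [DecidableRel G.Adj] (u : V) (S : Finset V)
    (hu : u ∈ S) :
    (cutEdges G S).card =
      (G.neighborFinset u \ S).card + ((cutEdges G S).filter (fun e => u ∉ e)).card := by
  rw [← card_filter_add_card_filter_not (s := cutEdges G S) (p := fun e => u ∈ e),
    ← aux2 G u S hu, card_image_of_injective _ (sym2_inj u)]

lemma step (G : SimpleGraph V) [DecidableRel G.Adj] (k : ℕ) (u : V) (S : Finset V)
    (hu : u ∉ S) (h1 : (cutEdges G S).card = k)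
    (h2 : (cutEdges G (insert u S)).card = k) (hdeg : k + 1 ≤ G.degree u) :
    k + 1 ≤ 2 * (G.neighborFinset u \ insert u S).card ∧
      (G.neighborFinset u ∩ S).card = (G.neighborFinset u \ insert u S).card := by
  have e1 := card_cut_not_mem G u S hu
  have e2 := card_cut_mem G u (insert u S) (mem_insert_self u S)
  rw [← aux3 G u S] at e2
  have heqc : (G.neighborFinset u ∩ S).card = (G.neighborFinset u \ insert u S).card := by
    omega
  have hNB : G.neighborFinset u ∩ insert u S = G.neighborFinset u ∩ S := by
    ext w
    simp only [mem_inter, SimpleGraph.mem_neighborFinset, mem_insert]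
    constructor
    · rintro ⟨h, rfl | h2⟩
      · exact absurd h (G.irrefl)
      · exact ⟨h, h2⟩
    · rintro ⟨h, h2⟩; exact ⟨h, Or.inr h2⟩
  have hsplit : (G.neighborFinset u ∩ insert u S).card +
      (G.neighborFinset u \ insert u S).card = G.degree u := by
    rw [SimpleGraph.degree]
    exact card_inter_add_card_sdiff _ _
  rw [hNB, heqc] at hsplit
  exact ⟨by omega, heqc⟩

/-- If the second snug shore of `u` equals the first snug shore of `v`, then
`u` and `v` are adjacent in `G` (the chain graph is a subgraph of `G`). -/
theorem chain_arc_adjacent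
    (k : ℕ) (hk : 1 ≤ k) (G : SimpleGraph V) [DecidableRel G.Adj]
    (hG : EdgeConnected G k) (r u v : V)
    (hu : Snug G k r u) (hv : Snug G k r v)
    (S₁u S₂u S₁v S₂v : Finset V)
    (hsu : SnugShores G k r u S₁u S₂u) (hsv : SnugShores G k r v S₁v S₂v)
    (heq : S₂u = S₁v) :
    G.Adj u v := by
  obtain ⟨⟨_, _, hcA⟩, ⟨_, _, hcB⟩, _, _, huA, hBA⟩ := hsu
  obtain ⟨⟨_, _, hcB'⟩, ⟨_, _, hcC⟩, _, _, hvB, hCB⟩ := hsv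
  subst heq hBA hCB
  set A := S₁u
  set B := insert u A with hB
  obtain ⟨hstepu, _⟩ := step G k u A huA hcA hcB hu.2.1
  obtain ⟨h2v, hstepv⟩ := step G k v B hvB hcB' hcC hv.2.1
  have huB : u ∈ B := mem_insert_self u A
  have huv : u ≠ v := fun h => hvB (h ▸ huB)
  by_contra hadj
  set X := (cutEdges G B).filter (fun e => u ∈ e) with hX
  set Y := (cutEdges G B).filter (fun e => v ∈ e) with hY
  have hXcard : X.card = (G.neighborFinset u \ B).card := by
    rw [hX, ← aux2 G u B huB, card_image_of_injective _ (sym2_inj u)]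
  have hYcard : Y.card = (G.neighborFinset v ∩ B).card := by
    rw [hY, ← aux1 G v B hvB, card_image_of_injective _ (sym2_inj v)]
  have hdisj : Disjoint X Y := by
    rw [disjoint_left]
    rintro e heX heY
    rw [hX, mem_filter] at heX
    rw [hY, mem_filter] at heY
    have he : e = s(u, v) :=
      (Sym2.mem_and_mem_iff huv).mp ⟨heX.2, heY.2⟩
    have hef : e ∈ G.edgeFinset := (mem_filter.mp heX.1).1
    rw [he, SimpleGraph.mem_edgeFinset, SimpleGraph.mem_edgeSet] at hef
    exact hadj hef
  have hsub : X ∪ Y ⊆ cutEdges G B := by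
    rw [hX, hY]
    exact union_subset (filter_subset _ _) (filter_subset _ _)
  have hle := card_le_card hsub
  rw [card_union_of_disjoint hdisj, hcB', hXcard, hYcard] at hle
  have hstepu' : k + 1 ≤ 2 * (G.neighborFinset u \ B).card := by rw [hB]; exact hstepu
  have h2v' : k + 1 ≤ 2 * (G.neighborFinset v ∩ B).card := by rw [hstepv]; exact h2v
  omega
end

section
/- Let k ≥ 1, let G be a k-edge-connected finite simple graph on V, and let S be a k-cut of G. Then the induced subgraph G[S] is connected. -/
open Finset

variable {V : Type*} [Fintype V] [DecidableEq V]

/-- In a `k`-edge-connected graph, every `k`-cut induces a connected subgraph. -/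
theorem kcut_connected
    (k : ℕ) (hk : 1 ≤ k) (hV : 2 ≤ Fintype.card V)
    (G : SimpleGraph V) [DecidableRel G.Adj] (hG : EdgeConnected G k)
    (S : Finset V) (hS : IsCut G k S) :
    (G.induce (S : Set V)).Connected := by
  classical
  obtain ⟨hSne, hSuniv, hcard⟩ := hS
  obtain ⟨v, hv⟩ := hSne
  have hv' : v ∈ (S : Set V) := by exact_mod_cast hv
  set A : Finset V := S.filter (fun a =>
    ∃ h : a ∈ (S : Set V), (G.induce (S : Set V)).Reachable ⟨v, hv'⟩ ⟨a, h⟩) with hAdef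
  have hclose : ∀ a b : V, a ∈ A → b ∈ S → G.Adj a b → b ∈ A := by
    intro a b ha hb hab
    rw [hAdef, Finset.mem_filter] at ha ⊢
    obtain ⟨haS, h1, hreach⟩ := ha
    have hb' : b ∈ (S : Set V) := by exact_mod_cast hb
    refine ⟨hb, hb', hreach.trans ?_⟩
    exact SimpleGraph.Adj.reachable (by simpa using hab)
  have hall : ∀ u : (S : Set V), (G.induce (S : Set V)).Reachable ⟨v, hv'⟩ u := by
    by_contra hcon
    push_neg at hcon
    obtain ⟨⟨u, hu'⟩, hu⟩ := hcon
    have huA : u ∉ A := by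
      intro h
      rw [hAdef, Finset.mem_filter] at h
      obtain ⟨_, h1, hr⟩ := h
      exact hu hr
    set B : Finset V := S \ A with hBdef
    have hAS : A ⊆ S := Finset.filter_subset _ _
    have hvA : v ∈ A := by
      rw [hAdef, Finset.mem_filter]
      exact ⟨hv, hv', SimpleGraph.Reachable.refl _⟩
    have huB : u ∈ B := Finset.mem_sdiff.mpr ⟨(by exact_mod_cast hu'), huA⟩
    have hnoedge : ∀ a b : V, a ∈ A → b ∈ B → ¬ G.Adj a b := by
      intro a b ha hb hab
      have := hclose a b ha (Finset.mem_sdiff.mp hb).1 hab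
      exact (Finset.mem_sdiff.mp hb).2 this
    have hsubA : cutEdges G A ⊆ cutEdges G S := by
      intro e he
      rw [cutEdges, Finset.mem_filter] at he ⊢
      obtain ⟨heG, x, y, hexy, hxA, hyA⟩ := he
      refine ⟨heG, x, y, hexy, hAS hxA, ?_⟩
      intro hyS
      have hyB : y ∈ B := Finset.mem_sdiff.mpr ⟨hyS, hyA⟩
      have hadj : G.Adj x y := by
        rw [← SimpleGraph.mem_edgeSet, ← hexy]
        exact SimpleGraph.mem_edgeFinset.mp heG
      exact hnoedge x y hxA hyB hadj
    have hsubB : cutEdges G B ⊆ cutEdges G S := by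
      intro e he
      rw [cutEdges, Finset.mem_filter] at he ⊢
      obtain ⟨heG, x, y, hexy, hxB, hyB⟩ := he
      refine ⟨heG, x, y, hexy, (Finset.mem_sdiff.mp hxB).1, ?_⟩
      intro hyS
      have hyA : y ∈ A := by
        by_contra hyA
        exact hyB (Finset.mem_sdiff.mpr ⟨hyS, hyA⟩)
      have hadj : G.Adj x y := by
        rw [← SimpleGraph.mem_edgeSet, ← hexy]
        exact SimpleGraph.mem_edgeFinset.mp heG
      exact hnoedge y x hyA hxB hadj.symm
    have hdisj : Disjoint (cutEdges G A) (cutEdges G B) := by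
      rw [Finset.disjoint_left]
      intro e heA heB
      rw [cutEdges, Finset.mem_filter] at heA heB
      obtain ⟨heG, x, y, hexy, hxA, hyA⟩ := heA
      obtain ⟨_, p, q, hepq, hpB, hqB⟩ := heB
      have hadj : G.Adj x y := by
        rw [← SimpleGraph.mem_edgeSet, ← hexy]
        exact SimpleGraph.mem_edgeFinset.mp heG
      rw [hexy, Sym2.eq_iff] at hepq
      rcases hepq with ⟨hx, hy⟩ | ⟨hx, hy⟩
      · subst hx
        exact (Finset.mem_sdiff.mp hpB).2 hxA
      · exact hnoedge x y hxA (hy ▸ hpB) hadj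
    obtain ⟨w, hw⟩ : ∃ w, w ∉ S := by
      by_contra h
      push_neg at h
      exact hSuniv (Finset.eq_univ_iff_forall.mpr h)
    have hAuniv : A ≠ Finset.univ := by
      intro h
      exact hw (hAS (h ▸ Finset.mem_univ w))
    have hBuniv : B ≠ Finset.univ := by
      intro h
      have : v ∈ B := h ▸ Finset.mem_univ v
      exact (Finset.mem_sdiff.mp this).2 hvA
    have hAk : k ≤ (cutEdges G A).card := hG A ⟨v, hvA⟩ hAuniv
    have hBk : k ≤ (cutEdges G B).card := hG B ⟨u, huB⟩ hBuniv
    have hsum : (cutEdges G A).card + (cutEdges G B).card ≤ (cutEdges G S).card := by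
      rw [← Finset.card_union_of_disjoint hdisj]
      exact Finset.card_le_card (Finset.union_subset hsubA hsubB)
    omega
  have : Nonempty (S : Set V) := ⟨⟨v, hv'⟩⟩
  exact ⟨fun x y => (hall x).symm.trans (hall y)⟩
end

section
/- Let k ≥ 1, let G be a minimally k-edge-connected finite simple graph on V with |V| ≥ 2, and fix a root r ∈ V. Then there exists a family 𝓛 of subsets of V∖{r} such that every member of 𝓛 is a k-cut of G, any two members of 𝓛 are nested or disjoint (𝓛 is laminar), and every edge of G crosses at least one member of 𝓛. -/
open Finset

variable {V : Type*} [Fintype V] [DecidableEq V]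

set_option linter.unusedSectionVars false
set_option maxHeartbeats 1000000

section Aux

lemma crosses_mk {S : Finset V} {x y : V} :
    Crosses S s(x,y) ↔ (x ∈ S ∧ y ∉ S) ∨ (y ∈ S ∧ x ∉ S) := by
  constructor
  · rintro ⟨a,b,hab,ha,hb⟩
    rw [Sym2.eq_iff] at hab
    rcases hab with ⟨rfl,rfl⟩|⟨rfl,rfl⟩ <;> tauto
  · rintro (⟨h1,h2⟩|⟨h1,h2⟩)
    · exact ⟨x,y,rfl,h1,h2⟩
    · exact ⟨y,x, Sym2.eq_swap, h1, h2⟩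

lemma mem_cutEdges {G : SimpleGraph V} [DecidableRel G.Adj] {S : Finset V} {e} :
    e ∈ cutEdges G S ↔ e ∈ G.edgeFinset ∧ Crosses S e := Finset.mem_filter

lemma uncross {G : SimpleGraph V} [DecidableRel G.Adj] {k : ℕ} {r : V}
    (hG : EdgeConnected G k) {A B : Finset V}
    (hA : IsCut G k A) (hB : IsCut G k B) (hrA : r ∉ A) (hrB : r ∉ B)
    (hAB : (A ∩ B).Nonempty) (hnAB : ¬ A ⊆ B) (hnBA : ¬ B ⊆ A) :
    IsCut G k (A ∩ B) ∧ IsCut G k (A ∪ B) ∧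
    cutEdges G A ∪ cutEdges G B ⊆ cutEdges G (A ∩ B) ∪ cutEdges G (A ∪ B) := by
  have hIne : A ∩ B ≠ Finset.univ := fun h => hrA (by
    have : r ∈ A ∩ B := h ▸ Finset.mem_univ r
    exact (Finset.mem_inter.1 this).1)
  have hUne : A ∪ B ≠ Finset.univ := fun h => hrA (by
    have : r ∈ A ∪ B := h ▸ Finset.mem_univ r
    rcases Finset.mem_union.1 this with h'|h'
    · exact h'
    · exact absurd h' hrB)
  have hUnon : (A ∪ B).Nonempty := hAB.mono (Finset.inter_subset_left.trans Finset.subset_union_left)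
  have hkI : k ≤ (cutEdges G (A ∩ B)).card := hG _ hAB hIne
  have hkU : k ≤ (cutEdges G (A ∪ B)).card := hG _ hUnon hUne
  -- subset lemmas
  have h1 : cutEdges G (A ∩ B) ∪ cutEdges G (A ∪ B) ⊆ cutEdges G A ∪ cutEdges G B := by
    intro e he
    induction e using Sym2.ind with
    | _ x y =>
      simp only [Finset.mem_union, mem_cutEdges, crosses_mk, Finset.mem_inter,
        Finset.mem_union] at he ⊢
      tauto
  have h2 : cutEdges G (A ∩ B) ∩ cutEdges G (A ∪ B) ⊆ cutEdges G A ∩ cutEdges G B := by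
    intro e he
    induction e using Sym2.ind with
    | _ x y =>
      simp only [Finset.mem_union, Finset.mem_inter, mem_cutEdges, crosses_mk,
        Finset.mem_union] at he ⊢
      tauto
  have cOld : (cutEdges G A ∪ cutEdges G B).card + (cutEdges G A ∩ cutEdges G B).card
      = k + k := by
    rw [Finset.card_union_add_card_inter, hA.2.2, hB.2.2]
  have cNew : (cutEdges G (A∩B) ∪ cutEdges G (A∪B)).card
      + (cutEdges G (A∩B) ∩ cutEdges G (A∪B)).card
      = (cutEdges G (A∩B)).card + (cutEdges G (A∪B)).card :=
    Finset.card_union_add_card_inter _ _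
  have hle1 := Finset.card_le_card h1
  have hle2 := Finset.card_le_card h2
  have hIeq : (cutEdges G (A ∩ B)).card = k := by omega
  have hUeq : (cutEdges G (A ∪ B)).card = k := by omega
  refine ⟨⟨hAB, hIne, hIeq⟩, ⟨hUnon, hUne, hUeq⟩, ?_⟩
  have : (cutEdges G A ∪ cutEdges G B).card ≤ (cutEdges G (A∩B) ∪ cutEdges G (A∪B)).card := by
    omega
  rw [Finset.eq_of_subset_of_card_le h1 this]
lemma crosses_compl {S : Finset V} (e : Sym2 V) : Crosses Sᶜ e ↔ Crosses S e := by
  induction e using Sym2.ind with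
  | _ x y => simp only [crosses_mk, Finset.mem_compl]; tauto

lemma cutEdges_compl (G : SimpleGraph V) [DecidableRel G.Adj] (S : Finset V) :
    cutEdges G Sᶜ = cutEdges G S := by
  ext e; simp only [mem_cutEdges, crosses_compl]

lemma isCut_compl {G : SimpleGraph V} [DecidableRel G.Adj] {k : ℕ} {S : Finset V}
    (h : IsCut G k S) : IsCut G k Sᶜ := by
  obtain ⟨h1, h2, h3⟩ := h
  refine ⟨?_, ?_, by rw [cutEdges_compl]; exact h3⟩
  · rw [Finset.nonempty_iff_ne_empty]
    intro hc
    exact h2 (by rwa [Finset.compl_eq_empty_iff] at hc)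
  · intro hc
    rw [Finset.compl_eq_univ_iff] at hc
    exact h1.ne_empty hc

lemma main_aux {G : SimpleGraph V} [DecidableRel G.Adj] {k : ℕ} (r : V)
    (hG : EdgeConnected G k) :
    ∀ n (M : Multiset (Finset V)),
    (M.map (fun S => (Fintype.card V)^2 - S.card^2)).sum ≤ n →
    (∀ S ∈ M, IsCut G k S ∧ r ∉ S) →
    ∃ L : Finset (Finset V),
      (∀ A ∈ L, IsCut G k A ∧ r ∉ A) ∧
      (∀ A ∈ L, ∀ B ∈ L, A ⊆ B ∨ B ⊆ A ∨ A ∩ B = ∅) ∧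
      (∀ e, (∃ S ∈ M, e ∈ cutEdges G S) → ∃ A ∈ L, e ∈ cutEdges G A) := by
  intro n
  induction n using Nat.strong_induction_on with
  | _ n IH =>
    intro M hμ hcuts
    by_cases hcr : ∃ A ∈ M, ∃ B ∈ M, ¬(A ⊆ B ∨ B ⊆ A ∨ A ∩ B = ∅)
    · obtain ⟨A, hAM, B, hBM, hAB⟩ := hcr
      push_neg at hAB
      obtain ⟨hnAB, hnBA, hne⟩ := hAB
      have hABne : A ≠ B := fun h => hnAB (h ▸ Finset.Subset.refl A)
      have hBM' : B ∈ M.erase A := (Multiset.mem_erase_of_ne hABne.symm).2 hBM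
      have hInon : (A ∩ B).Nonempty := hne
      obtain ⟨hcA, hrA⟩ := hcuts A hAM
      obtain ⟨hcB, hrB⟩ := hcuts B hBM
      obtain ⟨hcI, hcU, hsub⟩ := uncross hG hcA hcB hrA hrB hInon hnAB hnBA
      set rest := (M.erase A).erase B with hrest
      have hMeq : M = A ::ₘ B ::ₘ rest := by
        rw [hrest, Multiset.cons_erase hBM', Multiset.cons_erase hAM]
      set M' : Multiset (Finset V) := (A ∩ B) ::ₘ (A ∪ B) ::ₘ rest with hM'
      -- measure decrease
      have hpa : (A ∩ B).card < A.card := by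
        apply Finset.card_lt_card
        rw [Finset.ssubset_iff_of_subset Finset.inter_subset_left]
        obtain ⟨x, hxA, hxB⟩ := Finset.not_subset.1 hnAB
        exact ⟨x, hxA, fun h => hxB (Finset.mem_inter.1 h).2⟩
      have haq : A.card < (A ∪ B).card := by
        apply Finset.card_lt_card
        rw [Finset.ssubset_iff_of_subset Finset.subset_union_left]
        obtain ⟨y, hyB, hyA⟩ := Finset.not_subset.1 hnBA
        exact ⟨y, Finset.mem_union_right _ hyB, hyA⟩
      have hsum : (A ∪ B).card + (A ∩ B).card = A.card + B.card :=
        Finset.card_union_add_card_inter A B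
      have hsq : A.card^2 + B.card^2 < (A ∩ B).card^2 + (A ∪ B).card^2 := by
        zify at hpa haq hsum ⊢
        nlinarith [mul_pos (by linarith : (0:ℤ) < (A.card:ℤ) - (A ∩ B).card)
          (by linarith : (0:ℤ) < ((A ∪ B).card:ℤ) - A.card)]
      have hbound : ∀ S : Finset V, S.card^2 ≤ (Fintype.card V)^2 := fun S =>
        Nat.pow_le_pow_left (Finset.card_le_univ S) 2
      have hμ' : (M'.map (fun S => (Fintype.card V)^2 - S.card^2)).sum <
          (M.map (fun S => (Fintype.card V)^2 - S.card^2)).sum := by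
        rw [hMeq, hM']
        simp only [Multiset.map_cons, Multiset.sum_cons]
        have h1 := hbound A; have h2 := hbound B
        have h3 := hbound (A ∩ B); have h4 := hbound (A ∪ B)
        omega
      have hcuts' : ∀ S ∈ M', IsCut G k S ∧ r ∉ S := by
        intro S hS
        rw [hM', Multiset.mem_cons, Multiset.mem_cons] at hS
        rcases hS with rfl | rfl | hS
        · exact ⟨hcI, fun h => hrA (Finset.mem_inter.1 h).1⟩
        · refine ⟨hcU, fun h => ?_⟩
          rcases Finset.mem_union.1 h with h' | h'
          · exact hrA h'
          · exact hrB h'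
        · exact hcuts S (hMeq ▸ Multiset.mem_cons_of_mem (Multiset.mem_cons_of_mem hS))
      obtain ⟨L, hL1, hL2, hL3⟩ := IH _ (lt_of_lt_of_le hμ' hμ) M' le_rfl hcuts'
      refine ⟨L, hL1, hL2, ?_⟩
      rintro e ⟨S, hSM, heS⟩
      by_cases hSA : S = A ∨ S = B
      · have he2 : e ∈ cutEdges G (A ∩ B) ∪ cutEdges G (A ∪ B) := by
          apply hsub
          rcases hSA with rfl | rfl
          · exact Finset.mem_union_left _ heS
          · exact Finset.mem_union_right _ heS
        rcases Finset.mem_union.1 he2 with h' | h'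
        · exact hL3 e ⟨A ∩ B, Multiset.mem_cons_self _ _, h'⟩
        · exact hL3 e ⟨A ∪ B, Multiset.mem_cons_of_mem (Multiset.mem_cons_self _ _), h'⟩
      · push_neg at hSA
        have : S ∈ rest :=
          (Multiset.mem_erase_of_ne hSA.2).2 ((Multiset.mem_erase_of_ne hSA.1).2 hSM)
        exact hL3 e ⟨S, Multiset.mem_cons_of_mem (Multiset.mem_cons_of_mem this), heS⟩
    · push_neg at hcr
      refine ⟨M.toFinset, ?_, ?_, ?_⟩
      · intro A hA; exact hcuts A (Multiset.mem_toFinset.1 hA)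
      · intro A hA B hB
        have h := hcr A (Multiset.mem_toFinset.1 hA) B (Multiset.mem_toFinset.1 hB)
        by_contra hc
        push_neg at hc
        exact (Finset.nonempty_iff_ne_empty.1 hc.2.2) (by tauto)
      · rintro e ⟨S, hSM, heS⟩
        exact ⟨S, Multiset.mem_toFinset.2 hSM, heS⟩

end Aux

/-- In a minimally `k`-edge-connected graph there is a laminar family of
`k`-cuts avoiding the root `r` such that every edge crosses some member. -/
theorem exists_laminar_family
    (k : ℕ) (hk : 1 ≤ k) (hV : 2 ≤ Fintype.card V)
    (G : SimpleGraph V) [DecidableRel G.Adj] (hG : EdgeConnected G k)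
    (hmin : ∀ e ∈ G.edgeSet, ∃ S : Finset V, IsCut G k S ∧ Crosses S e)
    (r : V) :
    ∃ L : Finset (Finset V),
      (∀ A ∈ L, IsCut G k A ∧ r ∉ A) ∧
      (∀ A ∈ L, ∀ B ∈ L, A ⊆ B ∨ B ⊆ A ∨ A ∩ B = ∅) ∧
      (∀ e ∈ G.edgeSet, ∃ A ∈ L, Crosses A e) := by
  classical
  set f : Sym2 V → Finset V := fun e =>
    if h : e ∈ G.edgeSet then
      (if r ∈ Classical.choose (hmin e h) then (Classical.choose (hmin e h))ᶜ
       else Classical.choose (hmin e h))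
    else ∅ with hf
  have hfe : ∀ e, ∀ h : e ∈ G.edgeSet,
      (IsCut G k (f e) ∧ r ∉ f e) ∧ e ∈ cutEdges G (f e) := by
    intro e h
    obtain ⟨hc, hcr⟩ := Classical.choose_spec (hmin e h)
    have hedge : e ∈ G.edgeFinset := SimpleGraph.mem_edgeFinset.2 h
    simp only [hf, dif_pos h]
    split_ifs with hr'
    · exact ⟨⟨isCut_compl hc, fun hc' => (Finset.mem_compl.1 hc') hr'⟩,
        mem_cutEdges.2 ⟨hedge, (crosses_compl e).2 hcr⟩⟩
    · exact ⟨⟨hc, hr'⟩, mem_cutEdges.2 ⟨hedge, hcr⟩⟩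
  set M : Multiset (Finset V) := G.edgeFinset.val.map f with hM
  have hcuts : ∀ S ∈ M, IsCut G k S ∧ r ∉ S := by
    intro S hS
    obtain ⟨e, he, rfl⟩ := Multiset.mem_map.1 hS
    exact (hfe e (SimpleGraph.mem_edgeFinset.1 (Finset.mem_val.mp he))).1
  obtain ⟨L, hL1, hL2, hL3⟩ := main_aux r hG _ M le_rfl hcuts
  refine ⟨L, hL1, hL2, ?_⟩
  intro e he
  obtain ⟨A, hAL, hA⟩ := hL3 e ⟨f e,
    Multiset.mem_map_of_mem f (Finset.mem_val.mpr (SimpleGraph.mem_edgeFinset.2 he)),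
    (hfe e he).2⟩
  exact ⟨A, hAL, (mem_cutEdges.1 hA).2⟩
end
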